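/- In any analytic Lawvere theory T, every morphism f : n → m factors as f = a ∘ π_φ with a analytic and φ : (k] → (n] a function, and this factorization is unique up to permutation: if f = a' ∘ π_{φ'} is another such factorization then there is σ ∈ S_k with φ ∘ σ = φ' and a = a' ∘ π_σ. -/

import Mathlib

/-- One step of the lexicographic decomposition of a sigma of `Fin`s. -/
def finSigmaSucc {k : ℕ} (ns : Fin (k + 1) → ℕ) :
    (Σ i : Fin (k + 1), Fin (ns i)) ≃ (Fin (ns 0) ⊕ Σ i : Fin k, Fin (ns i.succ)) where
  toFun p := Fin.cases (motive := fun i => Fin (ns i) → Fin (ns 0) ⊕ Σ i : Fin k, Fin (ns i.succ))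
      (fun j => Sum.inl j) (fun i j => Sum.inr ⟨i, j⟩) p.1 p.2
  invFun q := q.elim (fun j => ⟨0, j⟩) (fun q => ⟨q.1.succ, q.2⟩)
  left_inv := by rintro ⟨i, j⟩; induction i using Fin.cases <;> simp
  right_inv := by rintro (j | ⟨i, j⟩) <;> simp

/-- The lexicographic identification of `Σ i, Fin (ns i)` with `Fin (∑ i, ns i)`. -/
def finSigma : ∀ {k : ℕ} (ns : Fin k → ℕ), (Σ i : Fin k, Fin (ns i)) ≃ Fin (∑ i, ns i)
  | 0, ns => (Equiv.equivOfIsEmpty _ _ : (Σ i : Fin 0, Fin (ns i)) ≃ Fin 0).trans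
      (finCongr (by simp))
  | k + 1, ns =>
    (finSigmaSucc ns).trans <|
      ((Equiv.refl (Fin (ns 0))).sumCongr (finSigma fun i => ns i.succ)).trans <|
        finSumFinEquiv.trans (finCongr (Fin.sum_univ_succ ns).symm)

/-- Operadic composition of permutations: on the lexicographic block decomposition,
`⟨i, r⟩ ↦ ⟨τ i, σs (τ i) r⟩`. -/
def symComp {k : ℕ} (ns : Fin k → ℕ) (σs : ∀ i, Equiv.Perm (Fin (ns i)))
    (τ : Equiv.Perm (Fin k)) : Equiv.Perm (Fin (∑ i, ns i)) :=
  (finCongr (Equiv.sum_comp τ ns)).symm.trans <|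
    ((finSigma fun i => ns (τ i)).symm.trans
      ((Equiv.sigmaCongr τ fun i => σs (τ i)).trans (finSigma ns)))

/-- A symmetric operad. -/
structure SymOperad where
  ops : ℕ → Type
  unit : ops 1
  comp : ∀ {k : ℕ} (ns : Fin k → ℕ), (∀ i, ops (ns i)) → ops k → ops (∑ i, ns i)
  act : ∀ {n : ℕ}, Equiv.Perm (Fin n) → ops n → ops n
  act_one : ∀ {n : ℕ} (x : ops n), act (Equiv.refl (Fin n)) x = x
  act_mul : ∀ {n : ℕ} (σ τ : Equiv.Perm (Fin n)) (x : ops n),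
    act (σ * τ) x = act σ (act τ x)
  comp_unit_left : ∀ {n : ℕ} (g : ops n),
    HEq (comp (fun _ : Fin n => 1) (fun _ => unit) g) g
  comp_unit_right : ∀ {n : ℕ} (g : ops n),
    HEq (comp (fun _ : Fin 1 => n) (fun _ => g) unit) g
  comp_assoc : ∀ {k : ℕ} (ns : Fin k → ℕ) (ms : ∀ i, Fin (ns i) → ℕ)
    (hs : ∀ i j, ops (ms i j)) (gs : ∀ i, ops (ns i)) (f : ops k),
    HEq (comp (fun p => ms ((finSigma ns).symm p).1 ((finSigma ns).symm p).2)
          (fun p => hs ((finSigma ns).symm p).1 ((finSigma ns).symm p).2)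
          (comp ns gs f))
        (comp (fun i => ∑ j, ms i j) (fun i => comp (ms i) (hs i) (gs i)) f)
  equiv_inner : ∀ {k : ℕ} (ns : Fin k → ℕ) (σs : ∀ i, Equiv.Perm (Fin (ns i)))
    (gs : ∀ i, ops (ns i)) (f : ops k),
    comp ns (fun i => act (σs i) (gs i)) f
      = act (symComp ns σs (Equiv.refl (Fin k))) (comp ns gs f)
  equiv_outer : ∀ {k : ℕ} (ns : Fin k → ℕ) (τ : Equiv.Perm (Fin k))
    (gs : ∀ i, ops (ns i)) (f : ops k),
    HEq (comp (fun i => ns (τ i)) (fun i => gs (τ i)) (act τ f))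
        (act (symComp ns (fun i => Equiv.refl (Fin (ns i))) τ) (comp ns gs f))

/-- Composition `a ∗ b` of unary operations of an operad. -/
def SymOperad.comp1 (O : SymOperad) (a b : O.ops 1) : O.ops 1 :=
  cast (congrArg O.ops (by simp)) (O.comp (fun _ : Fin 1 => 1) (fun _ => a) b)

/-- Composition `⟨c 1, …, c r⟩ ∗ h` of an `r`-ary operation with unary operations. -/
def SymOperad.unaryComp (O : SymOperad) {r : ℕ} (c : Fin r → O.ops 1) (h : O.ops r) :
    O.ops r :=
  cast (congrArg O.ops (by simp)) (O.comp (fun _ : Fin r => 1) c h)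
/-- A Lawvere theory: a category with objects the natural numbers where `n` is the
`n`-fold power of `1` with chosen projections.  `comp f g` is `f` followed by `g`. -/
structure LawTheory where
  Hom : ℕ → ℕ → Type
  id : ∀ n : ℕ, Hom n n
  comp : ∀ {a b c : ℕ}, Hom a b → Hom b c → Hom a c
  id_comp : ∀ {a b : ℕ} (f : Hom a b), comp (id a) f = f
  comp_id : ∀ {a b : ℕ} (f : Hom a b), comp f (id b) = f
  assoc : ∀ {a b c d : ℕ} (f : Hom a b) (g : Hom b c) (h : Hom c d),
    comp (comp f g) h = comp f (comp g h)
  proj : ∀ (n : ℕ), Fin n → Hom n 1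
  tuple : ∀ {a n : ℕ}, (Fin n → Hom a 1) → Hom a n
  tuple_proj : ∀ {a n : ℕ} (fs : Fin n → Hom a 1) (i : Fin n),
    comp (tuple fs) (proj n i) = fs i
  tuple_eta : ∀ {a n : ℕ} (g : Hom a n),
    tuple (fun i => comp g (proj n i)) = g

namespace LawTheory

variable (T : LawTheory)

/-- The structural morphism `π_φ : n → m` induced by a function `φ : (m] → (n]`. -/
def pi {n m : ℕ} (φ : Fin m → Fin n) : T.Hom n m :=
  T.tuple fun i => T.proj n (φ i)

/-- The product map `f₁ × ⋯ × f_k : ∑ ns i → k` of operations `fs i : ns i → 1`,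
formed via the chosen projections and the lexicographic block decomposition. -/
def prodMap {k : ℕ} (ns : Fin k → ℕ) (fs : ∀ i, T.Hom (ns i) 1) :
    T.Hom (∑ i, ns i) k :=
  T.tuple fun i => T.comp (T.pi fun j : Fin (ns i) => finSigma ns ⟨i, j⟩) (fs i)

/-- Operadic composition of the operations of a Lawvere theory:
`⟨f₁,…,f_k⟩ ∗ f = f ∘ (f₁ × ⋯ × f_k)`. -/
def opComp {k : ℕ} (ns : Fin k → ℕ) (fs : ∀ i, T.Hom (ns i) 1) (f : T.Hom k 1) :
    T.Hom (∑ i, ns i) 1 :=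
  T.comp (T.prodMap ns fs) f

/-- The action `σ · f = f ∘ π_σ` of a permutation on an operation. -/
def opAct {n : ℕ} (σ : Equiv.Perm (Fin n)) (f : T.Hom n 1) : T.Hom n 1 :=
  T.comp (T.pi ⇑σ) f

/-- A morphism `f : a → b` is invertible (an isomorphism). -/
def IsInvertible {a b : ℕ} (f : T.Hom a b) : Prop :=
  ∃ g : T.Hom b a, T.comp f g = T.id a ∧ T.comp g f = T.id b

/-- Structural morphisms: the closure under isomorphism of the image of the unique
interpretation from the initial Lawvere theory `𝔽ᵒᵖ`. -/
def Structural {n m : ℕ} (f : T.Hom n m) : Prop :=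
  ∃ (φ : Fin m → Fin n) (u : T.Hom n n) (v : T.Hom m m),
    T.IsInvertible u ∧ T.IsInvertible v ∧ f = T.comp u (T.comp (T.pi φ) v)

/-- `e` is left orthogonal to `m`: unique diagonal fillers exist. -/
def Orthogonal {a b c d : ℕ} (e : T.Hom a b) (m : T.Hom c d) : Prop :=
  ∀ (u : T.Hom a c) (v : T.Hom b d), T.comp u m = T.comp e v →
    ∃! w : T.Hom b c, T.comp e w = u ∧ T.comp w m = v

/-- Analytic morphisms: those right orthogonal to all structural morphisms. -/
def Analytic {c d : ℕ} (f : T.Hom c d) : Prop :=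
  ∀ {a b : ℕ} (e : T.Hom a b), T.Structural e → T.Orthogonal e f

/-- The canonical map `ρ_n : S_n × Aut(1)ⁿ → Hom(n,n)`,
`(σ, a) ↦ (a₁ × ⋯ × a_n) ∘ π_σ`. -/
def rho (n : ℕ)
    (p : Equiv.Perm (Fin n) × (Fin n → {f : T.Hom 1 1 // T.IsInvertible f})) :
    T.Hom n n :=
  T.comp (T.pi ⇑p.1) (T.tuple fun i => T.comp (T.proj n i) (p.2 i).1)

/-- `T` has simple automorphisms: each `ρ_n` is a bijection onto the automorphisms. -/
def HasSimpleAut : Prop :=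
  ∀ n : ℕ, Function.Injective (T.rho n) ∧
    Set.range (T.rho n) = {f : T.Hom n n | T.IsInvertible f}

/-- `T` is an analytic Lawvere theory: structural and analytic morphisms form a
factorization system and `T` has simple automorphisms. -/
def IsAnalyticTheory : Prop :=
  (∀ {n m : ℕ} (f : T.Hom n m), ∃ (k : ℕ) (e : T.Hom n k) (g : T.Hom k m),
      T.Structural e ∧ T.Analytic g ∧ f = T.comp e g) ∧ T.HasSimpleAut

end LawTheory

/-- A morphism of symmetric operads. -/
structure OperadHom (O O' : SymOperad) where
  map : ∀ n : ℕ, O.ops n → O'.ops n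
  map_unit : map 1 O.unit = O'.unit
  map_comp : ∀ {k : ℕ} (ns : Fin k → ℕ) (gs : ∀ i, O.ops (ns i)) (f : O.ops k),
    map _ (O.comp ns gs f) = O'.comp ns (fun i => map _ (gs i)) (map k f)
  map_act : ∀ {n : ℕ} (σ : Equiv.Perm (Fin n)) (x : O.ops n),
    map n (O.act σ x) = O'.act σ (map n x)

/-- An interpretation of Lawvere theories: an identity-on-objects functor
preserving the chosen projections. -/
structure LawHom (T T' : LawTheory) where
  map : ∀ {a b : ℕ}, T.Hom a b → T'.Hom a b
  map_id : ∀ n : ℕ, map (T.id n) = T'.id n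
  map_comp : ∀ {a b c : ℕ} (f : T.Hom a b) (g : T.Hom b c),
    map (T.comp f g) = T'.comp (map f) (map g)
  map_proj : ∀ (n : ℕ) (i : Fin n), map (T.proj n i) = T'.proj n i

/-- `S` is the symmetric operad of operations of the Lawvere theory `T`. -/
def IsOperadOf (T : LawTheory) (S : SymOperad) : Prop :=
  S.ops = (fun n => T.Hom n 1) ∧ HEq S.unit (T.id 1) ∧
    HEq (@SymOperad.comp S) (@LawTheory.opComp T) ∧
    HEq (@SymOperad.act S) (@LawTheory.opAct T)

namespace LawAux

variable {T : LawTheory}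

lemma hom_ext {a n : ℕ} {f g : T.Hom a n}
    (h : ∀ i, T.comp f (T.proj n i) = T.comp g (T.proj n i)) : f = g := by
  rw [← T.tuple_eta f, ← T.tuple_eta g]
  exact congrArg (fun fs => T.tuple fs) (funext h)

lemma pi_proj {n m : ℕ} (φ : Fin m → Fin n) (i : Fin m) :
    T.comp (T.pi φ) (T.proj m i) = T.proj n (φ i) := T.tuple_proj _ i

lemma pi_comp_pi {n m l : ℕ} (φ : Fin m → Fin n) (ψ : Fin l → Fin m) :
    T.comp (T.pi φ) (T.pi ψ) = T.pi (φ ∘ ψ) := by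
  apply hom_ext; intro i
  rw [T.assoc, pi_proj, pi_proj, pi_proj]
  rfl

lemma inv_id (n : ℕ) : T.IsInvertible (T.id n) := ⟨T.id n, T.id_comp _, T.id_comp _⟩

lemma inv_comp {a b c : ℕ} {f : T.Hom a b} {g : T.Hom b c}
    (hf : T.IsInvertible f) (hg : T.IsInvertible g) : T.IsInvertible (T.comp f g) := by
  obtain ⟨f', hff', hf'f⟩ := hf
  obtain ⟨g', hgg', hg'g⟩ := hg
  refine ⟨T.comp g' f', ?_, ?_⟩
  · rw [T.assoc f g _, ← T.assoc g g' f', hgg', T.id_comp, hff']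
  · rw [T.assoc g' f' _, ← T.assoc f' f g, hf'f, T.id_comp, hg'g]

lemma zero_ext {a : ℕ} (f g : T.Hom a 0) : f = g :=
  hom_ext fun i => i.elim0

lemma rho_proj {n : ℕ} (σ : Equiv.Perm (Fin n))
    (bs : Fin n → {f : T.Hom 1 1 // T.IsInvertible f}) (i : Fin n) :
    T.comp (T.rho n (σ, bs)) (T.proj n i) = T.comp (T.proj n (σ i)) (bs i).1 := by
  show T.comp (T.comp (T.pi ⇑σ) (T.tuple fun j => T.comp (T.proj n j) (bs j).1))
      (T.proj n i) = _
  rw [T.assoc, T.tuple_proj, ← T.assoc, pi_proj]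

lemma proj_inj {n : ℕ} (hInj : Function.Injective (T.rho n)) {p q : Fin n}
    (h : T.proj n p = T.proj n q) : p = q := by
  by_contra hne
  have h5 : T.rho n (Equiv.swap p q, fun _ => ⟨T.id 1, inv_id 1⟩)
      = T.rho n (Equiv.refl _, fun _ => ⟨T.id 1, inv_id 1⟩) := by
    apply hom_ext; intro i
    rw [rho_proj, rho_proj, T.comp_id, T.comp_id, Equiv.refl_apply]
    rcases eq_or_ne i p with rfl | h1
    · rw [Equiv.swap_apply_left]; exact h.symm
    rcases eq_or_ne i q with rfl | h2
    · rw [Equiv.swap_apply_right]; exact h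
    · rw [Equiv.swap_apply_of_ne_of_ne h1 h2]
  have h7 : Equiv.swap p q = Equiv.refl (Fin n) := congrArg Prod.fst (hInj h5)
  have hqp : q = p := by simpa using congrArg (fun e : Equiv.Perm (Fin n) => e p) h7
  exact hne hqp.symm

lemma proj_unary {n : ℕ} (hInj : Function.Injective (T.rho n)) {p q : Fin n}
    {d : T.Hom 1 1} (hd : T.IsInvertible d)
    (h : T.comp (T.proj n p) d = T.proj n q) : p = q ∧ d = T.id 1 := by
  obtain ⟨d', hdd', hd'd⟩ := hd
  have hd2 : T.IsInvertible d := ⟨d', hdd', hd'd⟩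
  have hd'2 : T.IsInvertible d' := ⟨d, hd'd, hdd'⟩
  have hq : T.comp (T.proj n q) d' = T.proj n p := by
    rw [← h, T.assoc, hdd', T.comp_id]
  have hpq : p = q := by
    by_contra hne
    have h5 : T.rho n (Equiv.swap p q,
          fun i => if i = p then ⟨d', hd'2⟩ else if i = q then ⟨d, hd2⟩
            else ⟨T.id 1, inv_id 1⟩)
        = T.rho n (Equiv.refl _, fun _ => ⟨T.id 1, inv_id 1⟩) := by
      apply hom_ext; intro i
      rw [rho_proj, rho_proj, T.comp_id, Equiv.refl_apply]
      rcases eq_or_ne i p with rfl | h1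
      · rw [Equiv.swap_apply_left]; simpa using hq
      rcases eq_or_ne i q with rfl | h2
      · rw [Equiv.swap_apply_right]; simpa [h1] using h
      · rw [Equiv.swap_apply_of_ne_of_ne h1 h2]; simp [h1, h2, T.comp_id]
    have h7 : Equiv.swap p q = Equiv.refl (Fin n) := congrArg Prod.fst (hInj h5)
    have hqp : q = p := by simpa using congrArg (fun e : Equiv.Perm (Fin n) => e p) h7
    exact hne hqp.symm
  subst hpq
  refine ⟨rfl, ?_⟩
  have h8 : T.rho n (Equiv.refl _,
        fun i => if i = p then ⟨d, hd2⟩ else ⟨T.id 1, inv_id 1⟩)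
      = T.rho n (Equiv.refl _, fun _ => ⟨T.id 1, inv_id 1⟩) := by
    apply hom_ext; intro i
    rw [rho_proj, rho_proj, T.comp_id, Equiv.refl_apply]
    rcases eq_or_ne i p with rfl | h1
    · simpa using h
    · simp [h1, T.comp_id]
  have h9 := congrFun (congrArg Prod.snd (hInj h8)) p
  simpa using congrArg Subtype.val h9

lemma structural_pi {n k : ℕ} (φ : Fin k → Fin n) : T.Structural (T.pi φ) :=
  ⟨φ, T.id n, T.id k, inv_id n, inv_id k, by rw [T.comp_id, T.id_comp]⟩

lemma analytic_comp_inv {k m : ℕ} {x : T.Hom k k} {g : T.Hom k m}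
    (hx : T.IsInvertible x) (hg : T.Analytic g) : T.Analytic (T.comp x g) := by
  intro α β e he u v huv
  obtain ⟨y, hxy, hyx⟩ := hx
  have h2 : T.comp (T.comp u x) g = T.comp e v := by rw [T.assoc]; exact huv
  obtain ⟨w, ⟨hw1, hw2⟩, hwu⟩ := hg e he (T.comp u x) v h2
  refine ⟨T.comp w y, ⟨?_, ?_⟩, ?_⟩
  · rw [← T.assoc, hw1, T.assoc, hxy, T.comp_id]
  · rw [T.assoc, ← T.assoc y x g, hyx, T.id_comp]; exact hw2
  · rintro w' ⟨hw'1, hw'2⟩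
    have hx' : T.comp w' x = w := by
      refine hwu _ ⟨by rw [← T.assoc, hw'1], ?_⟩
      rw [T.assoc]; exact hw'2
    rw [← hx', T.assoc, hxy, T.comp_id]

lemma no_iso_zero (hSA : T.HasSimpleAut) {k : ℕ} (h : T.Hom k 0) (w : T.Hom 0 k)
    (hhw : T.comp h w = T.id k) : k = 0 := by
  match k with
  | 0 => rfl
  | 1 =>
    exfalso
    have key : ∀ i : Fin 2, T.proj 2 i = T.comp (T.comp (T.proj 2 i) h) w := fun i => by
      rw [T.assoc, hhw, T.comp_id]
    have e : T.proj 2 0 = T.proj 2 1 := by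
      rw [key 0, key 1, zero_ext (T.comp (T.proj 2 0) h) (T.comp (T.proj 2 1) h)]
    have := proj_inj (hSA 2).1 e
    exact absurd (congrArg Fin.val this) (by simp)
  | (k + 2) =>
    exfalso
    have key : ∀ ψ : Fin (k+2) → Fin (k+2), T.pi ψ = T.id (k+2) := fun ψ => by
      have hz : T.comp (T.pi ψ) h = T.comp (T.id _) h := zero_ext _ _
      calc T.pi ψ = T.comp (T.pi ψ) (T.comp h w) := by rw [hhw, T.comp_id]
        _ = T.comp (T.comp (T.pi ψ) h) w := (T.assoc _ _ _).symm
        _ = T.comp (T.comp (T.id _) h) w := by rw [hz]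
        _ = T.id (k+2) := by rw [T.id_comp, hhw]
    have e : T.proj (k+2) 0 = T.proj (k+2) 1 := by
      have h1 := key (fun _ => 0)
      have h2 : T.comp (T.pi (fun _ : Fin (k+2) => (0 : Fin (k+2)))) (T.proj _ 1)
          = T.proj _ 1 := by rw [h1, T.id_comp]
      rw [pi_proj] at h2; exact h2
    have := proj_inj (hSA (k+2)).1 e
    exact absurd (congrArg Fin.val this) (by simp)

lemma iso_arity_aux (hSA : T.HasSimpleAut) {k k' : ℕ} (hk : 0 < k) (hk' : 0 < k')
    (h : T.Hom k k') (w : T.Hom k' k)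
    (hhw : T.comp h w = T.id k) (hwh : T.comp w h = T.id k') : k = k' := by
  set N := k + k' with hN
  set ι₁ : Fin k → Fin N := Fin.castAdd k' with hι₁
  set ι₂ : Fin k' → Fin N := Fin.natAdd k with hι₂
  set c : Fin N → T.Hom N 1 :=
    Fin.addCases (fun j => T.comp (T.pi ι₂) (T.comp w (T.proj k j)))
      (fun j => T.comp (T.pi ι₁) (T.comp h (T.proj k' j))) with hc
  set A : T.Hom N N := T.tuple c with hA
  have hAl : ∀ j : Fin k,
      T.comp A (T.proj N (ι₁ j)) = T.comp (T.pi ι₂) (T.comp w (T.proj k j)) := fun j => by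
    rw [hA, T.tuple_proj, hc]
    exact Fin.addCases_left j
  have hAr : ∀ j : Fin k',
      T.comp A (T.proj N (ι₂ j)) = T.comp (T.pi ι₁) (T.comp h (T.proj k' j)) := fun j => by
    rw [hA, T.tuple_proj, hc]
    exact Fin.addCases_right j
  have hA2 : T.comp A (T.pi ι₂) = T.comp (T.pi ι₁) h := by
    apply hom_ext; intro j'
    rw [T.assoc, T.assoc, pi_proj, hAr j']
  have hA1 : T.comp A (T.pi ι₁) = T.comp (T.pi ι₂) w := by
    apply hom_ext; intro j'
    rw [T.assoc, T.assoc, pi_proj, hAl j']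
  have hAA : T.comp A A = T.id N := by
    apply hom_ext; intro i
    rw [T.id_comp]
    induction i using Fin.addCases with
    | left j =>
      rw [T.assoc, hAl j, ← T.assoc, hA2, T.assoc, ← T.assoc h w _, hhw, T.id_comp,
        pi_proj]
    | right j =>
      rw [T.assoc, hAr j, ← T.assoc, hA1, T.assoc, ← T.assoc w h _, hwh, T.id_comp,
        pi_proj]
  obtain ⟨⟨σ, bs⟩, hσ⟩ : A ∈ Set.range (T.rho N) := by
    rw [(hSA N).2]; exact ⟨A, hAA, hAA⟩
  have hcomp : ∀ i, T.comp A (T.proj N i) = T.comp (T.proj N (σ i)) (bs i).1 :=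
    fun i => by rw [← hσ, rho_proj]
  have cancel : ∀ (i : Fin N) {p q : Fin N},
      T.comp (T.proj N q) (bs i).1 = T.comp (T.proj N p) (bs i).1 → q = p := by
    intro i p q hqp
    obtain ⟨b', hb1, hb2⟩ := (bs i).2
    apply proj_inj (hSA N).1
    have := congrArg (fun x => T.comp x b') hqp
    simpa [T.assoc, hb1, T.comp_id] using this
  have hblock : ∀ (X : T.Hom N 1) (i : Fin N) (ι : Fin N → Prop)
      (hX : ∀ χ : Fin N → Fin N, (∀ r, ι r → χ r = r) → T.comp (T.pi χ) X = X)
      (hc1 : X = T.comp (T.proj N (σ i)) (bs i).1), ι (σ i) := by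
    intro X i ι hX hc1
    by_contra hni
    -- every index equals σ i, contradiction with N ≥ 2
    have key : ∀ q : Fin N, q = σ i := by
      intro q
      apply cancel i
      have hχ := hX (fun r => if r = σ i then q else r)
        (fun r hr => if_neg (fun hcon : r = σ i => hni (hcon ▸ hr)))
      rw [hc1, ← T.assoc, pi_proj] at hχ
      simpa using hχ
    have h01 : (⟨0, by omega⟩ : Fin N) = ⟨1, by omega⟩ :=
      (key ⟨0, by omega⟩).trans (key ⟨1, by omega⟩).symm
    exact absurd (congrArg Fin.val h01) (by simp)
  have K2 : ∀ j : Fin k', (σ (ι₂ j)).val < k := by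
    intro j
    have := hblock (T.comp (T.pi ι₁) (T.comp h (T.proj k' j))) (ι₂ j)
      (fun r => r.val < k) ?_ ?_
    · exact this
    · intro χ hχ
      rw [← T.assoc, pi_comp_pi]
      congr 2
      funext j''
      exact hχ (ι₁ j'') j''.isLt
    · rw [← hAr j, hcomp]
  have K1 : ∀ j : Fin k, k ≤ (σ (ι₁ j)).val := by
    intro j
    have := hblock (T.comp (T.pi ι₂) (T.comp w (T.proj k j))) (ι₁ j)
      (fun r => k ≤ r.val) ?_ ?_
    · exact this
    · intro χ hχ
      rw [← T.assoc, pi_comp_pi]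
      congr 2
      funext j''
      exact hχ (ι₂ j'') (by simp [hι₂])
    · rw [← hAl j, hcomp]
  have hle1 : k' ≤ k := by
    have hinj : Function.Injective
        (fun j : Fin k' => (⟨(σ (ι₂ j)).val, K2 j⟩ : Fin k)) := by
      intro a b hab
      simp only [Fin.mk.injEq] at hab
      have h2 := congrArg Fin.val (σ.injective (Fin.ext hab))
      simp [hι₂] at h2
      exact Fin.ext h2
    simpa using Fintype.card_le_of_injective _ hinj
  have hle2 : k ≤ k' := by
    have hinj : Function.Injective
        (fun j : Fin k => (⟨(σ (ι₁ j)).val - k, by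
          have h1 := (σ (ι₁ j)).isLt
          have h2 := K1 j
          omega⟩ : Fin k')) := by
      intro a b hab
      simp only [Fin.mk.injEq] at hab
      have h1a := K1 a
      have h1b := K1 b
      have h1 : σ (ι₁ a) = σ (ι₁ b) := Fin.ext (by omega)
      have h2 := congrArg Fin.val (σ.injective h1)
      simp [hι₁] at h2
      exact Fin.ext h2
    simpa using Fintype.card_le_of_injective _ hinj
  omega

lemma iso_arity (hSA : T.HasSimpleAut) {k k' : ℕ} (h : T.Hom k k') (w : T.Hom k' k)
    (hhw : T.comp h w = T.id k) (hwh : T.comp w h = T.id k') : k = k' := by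
  match k, k' with
  | k, 0 => exact no_iso_zero hSA h w hhw
  | 0, k' => exact (no_iso_zero hSA w h hwh).symm
  | (ka + 1), (kb + 1) =>
    exact iso_arity_aux hSA (Nat.succ_pos ka) (Nat.succ_pos kb) h w hhw hwh

end LawAux

/-- in an analytic Lawvere theory every morphism factors as
`f = a ∘ π_φ` with `a` analytic, uniquely up to a permutation. -/
theorem analytic_theory_factorization (T : LawTheory) (hT : T.IsAnalyticTheory)
    {n m : ℕ} (f : T.Hom n m) :
    (∃ (k : ℕ) (φ : Fin k → Fin n) (a : T.Hom k m),
        T.Analytic a ∧ f = T.comp (T.pi φ) a) ∧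
    (∀ (k k' : ℕ) (φ : Fin k → Fin n) (a : T.Hom k m)
        (φ' : Fin k' → Fin n) (a' : T.Hom k' m),
        T.Analytic a → T.Analytic a' →
        f = T.comp (T.pi φ) a → f = T.comp (T.pi φ') a' →
        ∃ σ : Fin k' ≃ Fin k, φ ∘ ⇑σ = φ' ∧ a = T.comp (T.pi ⇑σ) a') := by
  classical
  obtain ⟨hFac, hSA⟩ := hT
  constructor
  · -- existence
    obtain ⟨k, e, g, he, hg, hf⟩ := hFac f
    obtain ⟨φ, u, v, hu, hv, he'⟩ := he
    obtain ⟨⟨σ, as⟩, hσ⟩ : u ∈ Set.range (T.rho n) := by rw [(hSA n).2]; exact hu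
    set D : T.Hom n n := T.tuple fun i => T.comp (T.proj n i) (as i).1 with hD
    set Dφ : T.Hom k k := T.tuple fun i => T.comp (T.proj k i) (as (φ i)).1 with hDφ
    have hU : u = T.comp (T.pi ⇑σ) D := by rw [← hσ, hD]; rfl
    have hC : T.comp D (T.pi φ) = T.comp (T.pi φ) Dφ := by
      rw [hD, hDφ]
      apply LawAux.hom_ext; intro i
      rw [T.assoc, T.assoc, LawAux.pi_proj, T.tuple_proj, T.tuple_proj, ← T.assoc,
        LawAux.pi_proj]
    have hDφrho : T.rho k (Equiv.refl (Fin k), fun i => as (φ i)) = Dφ := by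
      apply LawAux.hom_ext; intro i
      rw [LawAux.rho_proj, hDφ, T.tuple_proj, Equiv.refl_apply]
    have hDφinv : T.IsInvertible Dφ := by
      have hmem : T.rho k (Equiv.refl (Fin k), fun i => as (φ i)) ∈ Set.range (T.rho k) :=
        Set.mem_range_self _
      rw [(hSA k).2] at hmem
      rwa [hDφrho] at hmem
    refine ⟨k, ⇑σ ∘ φ, T.comp Dφ (T.comp v g), ?_, ?_⟩
    · exact LawAux.analytic_comp_inv hDφinv (LawAux.analytic_comp_inv hv hg)
    · calc f = T.comp e g := hf
        _ = T.comp (T.comp u (T.comp (T.pi φ) v)) g := by rw [he']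
        _ = T.comp (T.comp (T.comp (T.pi ⇑σ) D) (T.comp (T.pi φ) v)) g := by rw [hU]
        _ = T.comp (T.pi ⇑σ) (T.comp (T.comp D (T.pi φ)) (T.comp v g)) := by
            simp only [T.assoc]
        _ = T.comp (T.pi ⇑σ) (T.comp (T.comp (T.pi φ) Dφ) (T.comp v g)) := by rw [hC]
        _ = T.comp (T.comp (T.pi ⇑σ) (T.pi φ)) (T.comp Dφ (T.comp v g)) := by
            simp only [T.assoc]
        _ = T.comp (T.pi (⇑σ ∘ φ)) (T.comp Dφ (T.comp v g)) := by rw [LawAux.pi_comp_pi]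
  · -- uniqueness
    intro k k' φ a φ' a' ha ha' hfa hfa'
    have hcond1 : T.comp (T.pi φ') a' = T.comp (T.pi φ) a := by rw [← hfa, ← hfa']
    obtain ⟨w', ⟨hw'1, hw'2⟩, -⟩ :=
      ha' (T.pi φ) (LawAux.structural_pi φ) (T.pi φ') a hcond1
    obtain ⟨w, ⟨hw1, hw2⟩, -⟩ :=
      ha (T.pi φ') (LawAux.structural_pi φ') (T.pi φ) a' hcond1.symm
    obtain ⟨w₀, hw₀, hw₀u⟩ :=
      ha (T.pi φ) (LawAux.structural_pi φ) (T.pi φ) a rfl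
    have h1 : T.comp w' w = T.id k := by
      have e1 := hw₀u (T.comp w' w)
        ⟨by rw [← T.assoc, hw'1, hw1], by rw [T.assoc, hw2, hw'2]⟩
      have e2 := hw₀u (T.id k) ⟨by rw [T.comp_id], by rw [T.id_comp]⟩
      rw [e1, e2]
    obtain ⟨w₀', hw₀', hw₀'u⟩ :=
      ha' (T.pi φ') (LawAux.structural_pi φ') (T.pi φ') a' rfl
    have h2 : T.comp w w' = T.id k' := by
      have e1 := hw₀'u (T.comp w w')
        ⟨by rw [← T.assoc, hw1, hw'1], by rw [T.assoc, hw'2, hw2]⟩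
      have e2 := hw₀'u (T.id k') ⟨by rw [T.comp_id], by rw [T.id_comp]⟩
      rw [e1, e2]
    have hkk : k = k' := LawAux.iso_arity hSA w' w h1 h2
    subst hkk
    obtain ⟨⟨σ, bs⟩, hσ⟩ : w' ∈ Set.range (T.rho k) := by
      rw [(hSA k).2]; exact ⟨w, h1, h2⟩
    have hL : ∀ i, φ (σ i) = φ' i ∧ (bs i).1 = T.id 1 := by
      intro i
      apply LawAux.proj_unary (hSA n).1 (bs i).2
      have hcmp := congrArg (fun x => T.comp x (T.proj k i)) hw'1
      rw [T.assoc, ← hσ, LawAux.rho_proj, ← T.assoc, LawAux.pi_proj, LawAux.pi_proj]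
        at hcmp
      exact hcmp
    have hw'pi : w' = T.pi ⇑σ := by
      apply LawAux.hom_ext; intro i
      rw [← hσ, LawAux.rho_proj, (hL i).2, T.comp_id, LawAux.pi_proj]
    exact ⟨σ, funext fun i => (hL i).1, by rw [← hw'pi]; exact hw'2.symm⟩
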